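/- Under the same hypotheses, the trilinear form (X,Y,Z) ↦ g(C_{JX} Y, Z) is also fully symmetric in X, Y, Z. -/
import Mathlib


/-- Under the same hypotheses as before (`g` nondegenerate symmetric, `J` `g`-skew with
`J² = ε Id`, `C_X` `g`-symmetric, anticommuting with `J`, `C_X Y = C_Y X`),
the trilinear form `(X,Y,Z) ↦ g(C_{JX} Y, Z)` is also fully symmetric in `X, Y, Z`. -/
theorem stmt_4 {V : Type*} [AddCommGroup V] [Module ℝ V] [FiniteDimensional ℝ V]
    (g : LinearMap.BilinForm ℝ V) (hnd : g.Nondegenerate) (hsymm : g.IsSymm)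
    (ε : ℝ) (hε : ε = 1 ∨ ε = -1)
    (J : V →ₗ[ℝ] V) (hJ2 : J ∘ₗ J = ε • LinearMap.id)
    (hJskew : ∀ X Y : V, g (J X) Y = - g X (J Y))
    (C : V →ₗ[ℝ] V →ₗ[ℝ] V)
    (hCsym : ∀ X Y Z : V, g (C X Y) Z = g Y (C X Z))
    (hanti : ∀ X : V, (C X) ∘ₗ J = -(J ∘ₗ C X))
    (hCsymm : ∀ X Y : V, C X Y = C Y X) :
    ∀ X Y Z : V, g (C (J X) Y) Z = g (C (J Y) X) Z ∧
      g (C (J X) Y) Z = g (C (J X) Z) Y ∧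
      g (C (J X) Y) Z = g (C (J Z) Y) X := by
  have key : ∀ X Y : V, C (J X) Y = - J (C X Y) := by
    intro X Y
    have h := congrFun (congrArg DFunLike.coe (hanti Y)) X
    simp only [LinearMap.comp_apply, LinearMap.neg_apply] at h
    rw [hCsymm (J X) Y, h, hCsymm Y X]
  intro X Y Z
  refine ⟨by rw [key X Y, key Y X, hCsymm], ?_, ?_⟩
  · rw [hCsym (J X) Y Z, hsymm.eq]
  · rw [key X Y, map_neg, LinearMap.neg_apply, hJskew, neg_neg,
      hCsym X Y (J Z), hCsymm X (J Z), ← hCsym (J Z) Y X, hsymm.eq]
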